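/- Let G be the hypergraph obtained from a single isolated vertex by first adding m − 1 isolated vertices (so m vertices total) and then adding one k-dominating set. Then the eigenvalues of L_G are: 0 with multiplicity 1, 1 with multiplicity m − 1, (m + k)/k with multiplicity 1, and (k+1)m/k with multiplicity k − 1. -/

import Mathlib

open Finset

/-- The hypergraph Laplacian as an operator on real-valued vertex functions:
`(L_G f)(v) = ∑_{e ∋ v} (1/(|e|-1)) ∑_{u ∈ e} (f v - f u)`. -/
noncomputable def lapOp {V : Type} [Fintype V] [DecidableEq V] (E : Finset (Finset V)) (f : V → ℝ) : V → ℝ :=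
  fun v => ∑ e ∈ E.filter (fun e => v ∈ e), (1 / ((e.card : ℝ) - 1)) * ∑ u ∈ e, (f v - f u)

/-- The matrix of the hypergraph Laplacian. -/
noncomputable def lapMatrix {V : Type} [Fintype V] [DecidableEq V] (E : Finset (Finset V)) : Matrix V V ℝ :=
  Matrix.of fun v w => ∑ e ∈ E.filter (fun e => v ∈ e),
    (1 / ((e.card : ℝ) - 1)) * ((if w = v then (e.card : ℝ) else 0) - (if w ∈ e then 1 else 0))

/-- Edge set obtained from `E` by adding a `k`-dominating set `S = Fin k` of fresh vertices:
the new edges are `S ∪ {u}` for every old vertex `u`. -/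
def domEdges {V : Type} [Fintype V] [DecidableEq V] (E : Finset (Finset V)) (k : ℕ) :
    Finset (Finset (V ⊕ Fin k)) :=
  E.image (Finset.image Sum.inl) ∪
    (Finset.univ : Finset V).image
      (fun u => insert (Sum.inl u) ((Finset.univ : Finset (Fin k)).image Sum.inr))

namespace Stmt5Aux

open Polynomial Matrix

theorem charpoly_conj' {n R : Type*} [Fintype n] [DecidableEq n] [CommRing R]
    (P Q L : Matrix n n R) (h : Q * P = 1) :
    (Q * L * P).charpoly = L.charpoly := by
  have key : charmatrix (Q * L * P) = Q.map C * charmatrix L * P.map C := by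
    unfold charmatrix
    rw [Matrix.mul_sub, Matrix.sub_mul]
    congr 1
    · have hd : (Matrix.diagonal fun _ : n => (X : R[X])) = (X : R[X]) • (1 : Matrix n n R[X]) := by
        rw [Matrix.smul_one_eq_diagonal]
      rw [scalar_apply, hd, Matrix.mul_smul, Matrix.smul_mul, Matrix.mul_one,
        ← Matrix.map_mul, h]
      simp
    · simp only [RingHom.mapMatrix_apply, Matrix.map_mul]
  rw [Matrix.charpoly, Matrix.charpoly, key, Matrix.det_mul, Matrix.det_mul]
  have h1 : Q.map C * P.map C = 1 := by rw [← Matrix.map_mul, h]; simp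
  have hdet : (Q.map C).det * (P.map C).det = 1 := by
    rw [← Matrix.det_mul, h1, Matrix.det_one]
  calc (Q.map C).det * (charmatrix L).det * (P.map C).det
      = (Q.map C).det * (P.map C).det * (charmatrix L).det := by ring
    _ = (charmatrix L).det := by rw [hdet, one_mul]

theorem charpoly_diag {n R : Type*} [Fintype n] [DecidableEq n] [CommRing R] (d : n → R) :
    (Matrix.diagonal d).charpoly = ∏ i, (X - C (d i)) := by
  rw [Matrix.charpoly]
  have h : charmatrix (Matrix.diagonal d) = Matrix.diagonal fun i => X - C (d i) := by
    ext i j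
    by_cases hij : i = j
    · subst hij; simp [charmatrix_apply_eq]
    · simp [charmatrix_apply_ne _ _ _ hij, Matrix.diagonal_apply_ne _ hij]
  rw [h, Matrix.det_diagonal]

section
variable (m k : ℕ) [NeZero m] [NeZero k]

noncomputable def Lx : Matrix (Fin m ⊕ Fin k) (Fin m ⊕ Fin k) ℝ :=
  Matrix.of fun v w =>
    Sum.elim
      (fun i => Sum.elim (fun i' => if i' = i then (1:ℝ) else 0) (fun _ => -(1/(k:ℝ))) w)
      (fun j => Sum.elim (fun _ => -(1/(k:ℝ))) (fun j' => if j' = j then (m:ℝ) else -((m:ℝ)/k)) w)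
      v

noncomputable def Pm : Matrix (Fin m ⊕ Fin k) (Fin m ⊕ Fin k) ℝ :=
  Matrix.of fun v w =>
    Sum.elim
      (fun j => if j = 0 then (1:ℝ)
        else (if v = Sum.inl j then 1 else 0) - (if v = Sum.inl 0 then 1 else 0))
      (fun j => if j = 0 then (Sum.elim (fun _ => (k:ℝ)) (fun _ => -(m:ℝ)) v)
        else (if v = Sum.inr j then 1 else 0) - (if v = Sum.inr 0 then 1 else 0)) w

noncomputable def Qm : Matrix (Fin m ⊕ Fin k) (Fin m ⊕ Fin k) ℝ :=
  Matrix.of fun v w =>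
    Sum.elim
      (fun i => if i = 0 then 1/((m:ℝ)+k)
        else Sum.elim (fun i' => (if i' = i then (1:ℝ) else 0) - 1/(m:ℝ)) (fun _ => 0) w)
      (fun j => if j = 0 then Sum.elim (fun _ => 1/((m:ℝ)*((m:ℝ)+k))) (fun _ => -(1/((k:ℝ)*((m:ℝ)+k)))) w
        else Sum.elim (fun _ => (0:ℝ)) (fun j' => (if j' = j then (1:ℝ) else 0) - 1/(k:ℝ)) w) v

noncomputable def dEig : Fin m ⊕ Fin k → ℝ :=
  Sum.elim (fun i => if i = 0 then 0 else 1)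
    (fun j => if j = 0 then ((m:ℝ)+k)/k else ((k:ℝ)+1)*(m:ℝ)/k)

omit [NeZero m] in
theorem lap_eq : lapMatrix (domEdges (∅ : Finset (Finset (Fin m))) k) = Lx m k := by
  have hk : (k : ℝ) ≠ 0 := Nat.cast_ne_zero.mpr (NeZero.ne k)
  set S : Finset (Fin m ⊕ Fin k) := (Finset.univ : Finset (Fin k)).image Sum.inr with hS
  set f : Fin m → Finset (Fin m ⊕ Fin k) := fun u => insert (Sum.inl u) S with hf
  have hmem_inl : ∀ (a u : Fin m), (Sum.inl a ∈ f u ↔ a = u) := by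
    intro a u; simp [hf, hS]
  have hmem_inr : ∀ (b : Fin k) (u : Fin m), Sum.inr b ∈ f u := by
    intro b u; simp [hf, hS]
  have hfinj : Function.Injective f := by
    intro u u' h
    have h1 : Sum.inl u ∈ f u' := h ▸ Finset.mem_insert_self _ _
    exact (hmem_inl u u').mp h1
  have hEdges : domEdges (∅ : Finset (Finset (Fin m))) k = Finset.univ.image f := by
    simp [domEdges, hf, hS]
  have hfcard : ∀ u, ((f u).card : ℝ) = (k : ℝ) + 1 := by
    intro u
    have h1 : Sum.inl u ∉ S := by simp [hS]
    rw [hf]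
    rw [Finset.card_insert_of_notMem h1, hS,
      Finset.card_image_of_injective _ Sum.inr_injective, Finset.card_univ, Fintype.card_fin]
    push_cast; ring
  ext v w
  rw [lapMatrix, Matrix.of_apply, hEdges]
  cases v with
  | inl a =>
    have hfilter : (Finset.univ.image f).filter (fun e => Sum.inl a ∈ e) = {f a} := by
      ext e
      simp only [Finset.mem_filter, Finset.mem_image, Finset.mem_univ, true_and,
        Finset.mem_singleton]
      constructor
      · rintro ⟨⟨u, rfl⟩, hmem⟩
        rw [(hmem_inl a u).mp hmem]
      · rintro rfl
        exact ⟨⟨a, rfl⟩, Finset.mem_insert_self _ _⟩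
    rw [hfilter, Finset.sum_singleton, hfcard]
    cases w with
    | inl c =>
      simp only [Lx, Matrix.of_apply, Sum.elim_inl, Sum.inl.injEq]
      rw [show ((k:ℝ) + 1 - 1) = (k:ℝ) by ring]
      by_cases hc : c = a
      · subst hc
        rw [if_pos rfl, if_pos ((hmem_inl c c).mpr rfl), if_pos rfl]
        field_simp
        ring
      · have h2 : Sum.inl c ∉ f a := by rw [hmem_inl]; exact hc
        simp [hc, h2, Sum.inl.injEq]
    | inr c =>
      simp only [Lx, Matrix.of_apply, Sum.elim_inl, Sum.elim_inr]
      rw [show ((k:ℝ) + 1 - 1) = (k:ℝ) by ring]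
      simp [hmem_inr]
  | inr b =>
    have hfilter : (Finset.univ.image f).filter (fun e => Sum.inr b ∈ e) = Finset.univ.image f := by
      apply Finset.filter_true_of_mem
      intro e he
      obtain ⟨u, _, rfl⟩ := Finset.mem_image.mp he
      exact hmem_inr b u
    rw [hfilter, Finset.sum_image (fun x _ y _ h => hfinj h)]
    cases w with
    | inl c =>
      simp only [Lx, Matrix.of_apply, Sum.elim_inr, Sum.elim_inl]
      have h3 : ∀ u : Fin m, (1 / (((f u).card : ℝ) - 1)) *
          ((if (Sum.inl c : Fin m ⊕ Fin k) = Sum.inr b then ((f u).card:ℝ) else 0) - (if Sum.inl c ∈ f u then 1 else 0))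
          = (1/(k:ℝ)) * (0 - (if c = u then 1 else 0)) := by
        intro u
        rw [hfcard, show ((k:ℝ) + 1 - 1) = (k:ℝ) by ring]
        simp [hmem_inl c u]
      rw [Finset.sum_congr rfl (fun u _ => h3 u)]
      simp
    | inr c =>
      simp only [Lx, Matrix.of_apply, Sum.elim_inr, Sum.inr.injEq]
      have h3 : ∀ u : Fin m, (1 / (((f u).card : ℝ) - 1)) *
          ((if c = b then ((f u).card:ℝ) else 0) - (if Sum.inr c ∈ f u then 1 else 0))
          = (1/(k:ℝ)) * ((if c = b then (k:ℝ)+1 else 0) - 1) := by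
        intro u
        rw [hfcard, show ((k:ℝ) + 1 - 1) = (k:ℝ) by ring]
        rw [if_pos (hmem_inr c u)]
      rw [Finset.sum_congr rfl (fun u _ => h3 u), Finset.sum_const, Finset.card_univ,
        Fintype.card_fin]
      by_cases hc : c = b
      · subst hc; rw [if_pos rfl, if_pos rfl]; field_simp
        simp [nsmul_eq_mul, hk]
      · simp [hc]; field_simp

theorem QP_eq_one : Qm m k * Pm m k = 1 := by
  have hm0 : (m:ℝ) ≠ 0 := Nat.cast_ne_zero.mpr (NeZero.ne m)
  have hk0 : (k:ℝ) ≠ 0 := Nat.cast_ne_zero.mpr (NeZero.ne k)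
  have hmk : (m:ℝ) + k ≠ 0 := by positivity
  ext v w
  rw [Matrix.mul_apply, Fintype.sum_sum_type]
  rcases v with i | i <;> rcases w with j | j <;>
    rcases eq_or_ne i 0 with rfl | hi <;> rcases eq_or_ne j 0 with rfl | hj <;>
    simp [Qm, Pm, Matrix.one_apply, Finset.sum_sub_distrib, mul_sub, sub_mul,
      ite_mul, mul_ite, Finset.card_univ, eq_comm, *] <;>
    field_simp <;> ring

lemma sum_ite_const {n : ℕ} (a : Fin n) (A B : ℝ) :
    ∑ x : Fin n, (if x = a then A else B) = A + ((n:ℝ) - 1) * B := by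
  have h : ∀ x : Fin n, (if x = a then A else B) = (if x = a then A - B else 0) + B := by
    intro x; by_cases h : x = a <;> simp [h]
  rw [Finset.sum_congr rfl fun x _ => h x, Finset.sum_add_distrib, Finset.sum_ite_eq',
    Finset.sum_const, Finset.card_univ, Fintype.card_fin]
  simp; ring

lemma sum_ite_const' {n : ℕ} (a : Fin n) (A B : ℝ) :
    ∑ x : Fin n, (if a = x then A else B) = A + ((n:ℝ) - 1) * B := by
  have h : ∀ x : Fin n, (if a = x then A else B) = (if x = a then A else B) := by
    intro x; by_cases h : a = x
    · simp [h]
    · simp [h, Ne.symm h]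
  rw [Finset.sum_congr rfl fun x _ => h x]
  exact sum_ite_const a A B

theorem LP_eq_PD : Lx m k * Pm m k = Pm m k * Matrix.diagonal (dEig m k) := by
  have hm0 : (m:ℝ) ≠ 0 := Nat.cast_ne_zero.mpr (NeZero.ne m)
  have hk0 : (k:ℝ) ≠ 0 := Nat.cast_ne_zero.mpr (NeZero.ne k)
  ext v w
  rw [Matrix.mul_apply, Fintype.sum_sum_type, Matrix.mul_diagonal]
  rcases v with i | i <;> rcases w with j | j <;>
    rcases eq_or_ne i 0 with rfl | hi <;> rcases eq_or_ne j 0 with rfl | hj <;>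
    simp [Lx, Pm, dEig, Finset.sum_sub_distrib, mul_sub, sub_mul,
      ite_mul, mul_ite, Finset.card_univ, eq_comm, sum_ite_const, sum_ite_const', *] <;>
    (try split_ifs) <;> (try field_simp) <;> try ring

lemma univ_val_map_ite {n : ℕ} [NeZero n] (A B : ℝ) :
    (Finset.univ : Finset (Fin n)).val.map (fun i => if i = 0 then A else B)
      = A ::ₘ Multiset.replicate (n - 1) B := by
  have h0 : (0 : Fin n) ∈ (Finset.univ : Finset (Fin n)).val := Finset.mem_univ_val _
  have h1 : (Finset.univ : Finset (Fin n)).val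
      = (0 : Fin n) ::ₘ ((Finset.univ : Finset (Fin n)).erase 0).val := by
    rw [Finset.erase_val]
    exact (Multiset.cons_erase h0).symm
  rw [h1, Multiset.map_cons, if_pos rfl]
  congr 1
  have h2 : ∀ x ∈ ((Finset.univ : Finset (Fin n)).erase 0).val,
      (if x = 0 then A else B) = B := by
    intro x hx
    rw [if_neg (Finset.mem_erase.mp (Finset.mem_val.mp hx)).1]
  rw [Multiset.map_congr rfl h2, Multiset.map_const']
  congr 1
  rw [← Finset.card_def, Finset.card_erase_of_mem (Finset.mem_univ _), Finset.card_univ,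
    Fintype.card_fin]

end

end Stmt5Aux

/-- Spectrum of the hypergraph obtained from `m` isolated vertices by one `k`-domination:
`0`, `1` (multiplicity `m-1`), `(m+k)/k`, and `(k+1)m/k` (multiplicity `k-1`). -/
theorem stmt_5 (m k : ℕ) (hm : 1 ≤ m) (hk : 1 ≤ k) :
    (lapMatrix (domEdges (∅ : Finset (Finset (Fin m))) k)).charpoly.roots =
      ((0 : ℝ) ::ₘ Multiset.replicate (m - 1) 1) + {((m : ℝ) + k) / k} +
        Multiset.replicate (k - 1) (((k : ℝ) + 1) * m / k) := by
  haveI : NeZero m := ⟨Nat.one_le_iff_ne_zero.mp hm⟩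
  haveI : NeZero k := ⟨Nat.one_le_iff_ne_zero.mp hk⟩
  open Stmt5Aux Polynomial in
  have hchar : (lapMatrix (domEdges (∅ : Finset (Finset (Fin m))) k)).charpoly
      = (Matrix.diagonal (dEig m k)).charpoly := by
    rw [lap_eq m k]
    rw [← charpoly_conj' (Pm m k) (Qm m k) (Lx m k) (QP_eq_one m k)]
    congr 1
    calc Qm m k * Lx m k * Pm m k = Qm m k * (Lx m k * Pm m k) := by rw [Matrix.mul_assoc]
      _ = Qm m k * (Pm m k * Matrix.diagonal (dEig m k)) := by rw [LP_eq_PD]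
      _ = Qm m k * Pm m k * Matrix.diagonal (dEig m k) := by rw [Matrix.mul_assoc]
      _ = Matrix.diagonal (dEig m k) := by rw [QP_eq_one, Matrix.one_mul]
  open Stmt5Aux Polynomial in
  rw [hchar, charpoly_diag]
  open Stmt5Aux Polynomial in
  have hprod : (∏ i, (X - C (Stmt5Aux.dEig m k i)))
      = (((Finset.univ : Finset (Fin m ⊕ Fin k)).val.map (dEig m k)).map
          (fun a : ℝ => X - C a)).prod := by
    rw [Multiset.map_map]
    rfl
  open Stmt5Aux Polynomial in
  rw [hprod, Polynomial.roots_multiset_prod_X_sub_C]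
  open Stmt5Aux in
  have huniv : (Finset.univ : Finset (Fin m ⊕ Fin k)).val
      = (Finset.univ : Finset (Fin m)).val.map Sum.inl
        + (Finset.univ : Finset (Fin k)).val.map Sum.inr := by
    rfl
  open Stmt5Aux in
  rw [huniv, Multiset.map_add, Multiset.map_map, Multiset.map_map]
  open Stmt5Aux in
  have hl : (Finset.univ : Finset (Fin m)).val.map (dEig m k ∘ Sum.inl)
      = (0 : ℝ) ::ₘ Multiset.replicate (m - 1) 1 := by
    have : dEig m k ∘ Sum.inl = fun i : Fin m => if i = 0 then (0:ℝ) else 1 := rfl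
    rw [this, univ_val_map_ite]
  open Stmt5Aux in
  have hr : (Finset.univ : Finset (Fin k)).val.map (dEig m k ∘ Sum.inr)
      = (((m:ℝ) + k) / k) ::ₘ Multiset.replicate (k - 1) (((k:ℝ) + 1) * m / k) := by
    have : dEig m k ∘ Sum.inr
        = fun j : Fin k => if j = 0 then ((m:ℝ)+k)/k else ((k:ℝ)+1)*(m:ℝ)/k := rfl
    rw [this, univ_val_map_ite]
  rw [hl, hr, ← Multiset.singleton_add (((m:ℝ) + k) / k), ← add_assoc]
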